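/- Let G be a 2-connected graph and x a vertex of G. If every vertex y ≠ x has degree d(y) ≥ δ, then for every two distinct vertices u and v of G there is a uv-path in G of order at least δ + 1. -/

import Mathlib

open SimpleGraph
set_option linter.unusedSectionVars false
set_option linter.unusedVariables false

/-- `G` is 2-connected: it has at least 3 vertices, is connected, and remains connected
after deleting any single vertex. -/
def TwoConnected {V : Type*} [Fintype V] (G : SimpleGraph V) : Prop :=
  3 ≤ Fintype.card V ∧ G.Connected ∧
    ∀ v : V, ((⊤ : G.Subgraph).deleteVerts {v}).coe.Connected

namespace TwoConnAux

variable {V : Type*}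

/-- There is a walk from `a` to `b` in `H` whose support stays inside `s`. -/
def WkIn (H : SimpleGraph V) (s : Set V) (a b : V) : Prop :=
  ∃ W : H.Walk a b, ∀ z ∈ W.support, z ∈ s

/-- relative connectivity within the vertex set `s`. -/
def RConn (H : SimpleGraph V) (s : Set V) : Prop :=
  s.Nonempty ∧ ∀ a ∈ s, ∀ b ∈ s, WkIn H s a b

/-- relative 2-connectivity within `s`. -/
def RTwo (H : SimpleGraph V) (s : Set V) : Prop :=
  3 ≤ s.ncard ∧ RConn H s ∧ ∀ c ∈ s, RConn H (s \ {c})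

variable {H : SimpleGraph V} {s t : Set V} {a b c : V}

lemma wkIn_refl (ha : a ∈ s) : WkIn H s a a :=
  ⟨Walk.nil, by simpa using ha⟩

lemma wkIn_symm (h : WkIn H s a b) : WkIn H s b a := by
  obtain ⟨W, hW⟩ := h
  exact ⟨W.reverse, by simpa [Walk.support_reverse] using hW⟩

lemma wkIn_trans (h1 : WkIn H s a b) (h2 : WkIn H s b c) : WkIn H s a c := by
  obtain ⟨W1, hW1⟩ := h1
  obtain ⟨W2, hW2⟩ := h2
  refine ⟨W1.append W2, ?_⟩
  intro z hz
  rw [Walk.support_append] at hz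
  rcases List.mem_append.1 hz with h | h
  · exact hW1 z h
  · exact hW2 z (List.mem_of_mem_tail h)

lemma wkIn_mono (hst : s ⊆ t) (h : WkIn H s a b) : WkIn H t a b := by
  obtain ⟨W, hW⟩ := h
  exact ⟨W, fun z hz => hst (hW z hz)⟩

lemma wkIn_adj (h : H.Adj a b) (ha : a ∈ s) (hb : b ∈ s) : WkIn H s a b :=
  ⟨Walk.cons h Walk.nil, by simp [ha, hb]⟩

lemma wkIn_left (h : WkIn H s a b) : a ∈ s := by
  obtain ⟨W, hW⟩ := h; exact hW a W.start_mem_support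

lemma wkIn_right (h : WkIn H s a b) : b ∈ s := by
  obtain ⟨W, hW⟩ := h; exact hW b W.end_mem_support

lemma first_step (hne : a ≠ b) (h : WkIn H s a b) :
    ∃ z ∈ s, H.Adj a z ∧ WkIn H s z b := by
  obtain ⟨W, hW⟩ := h
  cases W with
  | nil => exact absurd rfl hne
  | cons hadj W' =>
      rename_i q
      refine ⟨q, ?_, hadj, W', fun z hz => hW z ?_⟩
      · exact hW q (by simp [Walk.support_cons])
      · simp [Walk.support_cons]; right; exact hz


variable {A B M D : Set V}

/-- Exit lemma: a walk starting in `A`, ending outside `A`, staying in `M`,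
where edges leave `A` only into `B`, yields an exit point `z ∈ B` together
with a walk to `z` staying in `A ∪ {z}`. -/
lemma exit_lemma (hstep : ∀ p ∈ A, ∀ q ∈ M, H.Adj p q → q ∈ A ∪ B) :
    ∀ {a b : V} (W : H.Walk a b), (∀ z ∈ W.support, z ∈ M) → a ∈ A → b ∉ A →
    ∃ z ∈ B, ∃ W' : H.Walk a z, ∀ y ∈ W'.support, y ∈ A ∪ {z} := by
  intro a b W
  induction W with
  | nil => intro _ ha hb; exact absurd ha hb
  | cons hadj W' ih =>
      rename_i p q r
      intro hsup ha hb
      have hqM : q ∈ M := hsup q (by simp [Walk.support_cons])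
      have hq : q ∈ A ∪ B := hstep p ha q hqM hadj
      by_cases hqA : q ∈ A
      · obtain ⟨z, hz, W2, hW2⟩ := ih (fun z hz => hsup z (by simp [Walk.support_cons]; right; exact hz)) hqA hb
        exact ⟨z, hz, Walk.cons hadj W2, by
          intro y hy
          rcases (by simpa [Walk.support_cons] using hy : y = p ∨ y ∈ W2.support) with rfl | hy
          · exact Or.inl ha
          · exact hW2 y hy⟩
      · refine ⟨q, hq.resolve_left hqA, Walk.cons hadj Walk.nil, ?_⟩
        intro y hy
        rcases (by simpa [Walk.support_cons] using hy : y = p ∨ y = q) with rfl | rfl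
        · exact Or.inl ha
        · exact Or.inr rfl

/-- Avoidance lemma. -/
lemma avoid_lemma {b : V}
    (hstep : ∀ p ∈ M, p ∉ D → p ≠ b → ∀ q ∈ M, H.Adj p q → q ∉ D) :
    ∀ {a b' : V} (W : H.Walk a b'), b' = b → (∀ z ∈ W.support, z ∈ M) → a ∉ D →
    ∃ W' : H.Walk a b', ∀ z ∈ W'.support, z ∈ M \ D := by
  intro a b' W
  induction W with
  | nil =>
      intro _ hsup ha
      exact ⟨Walk.nil, by simpa using ⟨hsup _ (by simp), ha⟩⟩
  | cons hadj W' ih =>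
      rename_i p q r
      intro hb hsup ha
      by_cases hpb : p = b
      · subst hb; subst hpb
        exact ⟨Walk.nil, by simpa using ⟨hsup _ (by simp [Walk.support_cons]), ha⟩⟩
      · have hpM : p ∈ M := hsup p (by simp [Walk.support_cons])
        have hqM : q ∈ M := hsup q (by simp [Walk.support_cons])
        have hqD : q ∉ D := hstep p hpM ha hpb q hqM (by subst hb; exact hadj)
        obtain ⟨W2, hW2⟩ := ih hb
          (fun z hz => hsup z (by simp [Walk.support_cons]; right; exact hz)) hqD
        refine ⟨Walk.cons hadj W2, ?_⟩
        intro z hz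
        rcases (by simpa [Walk.support_cons] using hz : z = p ∨ z ∈ W2.support) with rfl | hz
        · exact ⟨hpM, ha⟩
        · exact hW2 z hz

/-- extract the last edge of a path ending at `t ∉ A` whose other vertices are in `A`. -/
lemma last_edge_aux {A : Set V} {t : V} :
    ∀ {a : V} (R : H.Walk t a), R.IsPath → (∀ z ∈ R.support, z ∈ A ∪ {t}) → a ∈ A → t ∉ A →
    ∃ z ∈ A, H.Adj z t ∧ ∃ W' : H.Walk z a, ∀ y ∈ W'.support, y ∈ A := by
  intro a R
  cases R with
  | nil => intro _ _ ha ht; exact absurd ha ht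
  | cons hadj Q₂ =>
      rename_i q
      intro hpath hsup ha ht
      have htq : t ∉ Q₂.support := ((Walk.cons_isPath_iff _ _).1 hpath).2
      have hQ₂ : ∀ y ∈ Q₂.support, y ∈ A := by
        intro y hy
        rcases hsup y (by simp [Walk.support_cons]; right; exact hy) with h | h
        · exact h
        · exact absurd (h ▸ hy) htq
      have hq : q ∈ A := hQ₂ q Q₂.start_mem_support
      exact ⟨q, hq, hadj.symm, Q₂, hQ₂⟩

/-- From a walk `a → t` (with `a ∈ A`, `t ∉ A`) whose support stays in `A ∪ {t}`,
get a neighbour `z ∈ A` of `t` together with a walk `a → z` inside `A`. -/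
lemma last_edge {A : Set V} {a t : V} (hA : a ∈ A) (ht : t ∉ A)
    (W : H.Walk a t) (hsup : ∀ z ∈ W.support, z ∈ A ∪ {t}) :
    ∃ z ∈ A, H.Adj z t ∧ ∃ W' : H.Walk a z, ∀ y ∈ W'.support, y ∈ A := by
  classical
  have hPpath : W.bypass.IsPath := W.bypass_isPath
  have hPsup : ∀ z ∈ W.bypass.support, z ∈ A ∪ {t} :=
    fun z hz => hsup z (W.support_bypass_subset hz)
  obtain ⟨z, hz, hadj, W', hW'⟩ := last_edge_aux W.bypass.reverse hPpath.reverse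
    (by intro y hy; exact hPsup y (by simpa [Walk.support_reverse] using hy)) hA ht
  exact ⟨z, hz, hadj, W'.reverse, by intro y hy; exact hW' y (by simpa [Walk.support_reverse] using hy)⟩

/-- combined: walk from `a ∈ A` to `t ∉ A` within `M`, steps leave `A` only to `t`:
produces an attachment. -/
lemma attach_lemma {A M : Set V} {t : V} (ht : t ∉ A)
    (hstep : ∀ p ∈ A, ∀ q ∈ M, H.Adj p q → q ∈ A ∪ {t}) {a : V} (ha : a ∈ A)
    (W : H.Walk a t) (hsup : ∀ z ∈ W.support, z ∈ M) :
    ∃ z ∈ A, H.Adj z t ∧ ∃ W' : H.Walk a z, ∀ y ∈ W'.support, y ∈ A := by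
  obtain ⟨z, hz, W1, hW1⟩ := exit_lemma (B := {t}) hstep W hsup ha ht
  rcases hz with rfl
  exact last_edge ha ht W1 hW1


variable [Fintype V]

lemma two_neighbors (h2 : RTwo H s) {w : V} (hw : w ∈ s) :
    ∃ z₁ z₂ : V, z₁ ≠ z₂ ∧ z₁ ∈ s ∧ z₂ ∈ s ∧ H.Adj w z₁ ∧ H.Adj w z₂ := by
  classical
  obtain ⟨hcard, hconn, hdel⟩ := h2
  have hfin : s.Finite := s.toFinite
  have h1 : (s \ {w}).Nonempty := by
    rw [← Set.ncard_pos hfin.diff]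
    have := Set.ncard_diff_singleton_of_mem hw
    omega
  obtain ⟨b, hbs, hbw⟩ := h1
  rw [Set.mem_singleton_iff] at hbw
  obtain ⟨z₁, hz₁s, hz₁adj, -⟩ := first_step (fun h => hbw h.symm) (hconn.2 w hw b hbs)
  have h2' : ((s \ {z₁}) \ {w}).Nonempty := by
    rw [← Set.ncard_pos hfin.diff.diff]
    have e1 : (s \ {z₁}).ncard = s.ncard - 1 := Set.ncard_diff_singleton_of_mem hz₁s
    have e2 : ((s \ {z₁}) \ {w}).ncard ≥ (s \ {z₁}).ncard - 1 := by
      by_cases hws : w ∈ s \ {z₁}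
      · rw [Set.ncard_diff_singleton_of_mem hws]
      · rw [Set.diff_singleton_eq_self hws]; omega
    omega
  obtain ⟨b₂, hb₂s, hb₂w⟩ := h2'
  rw [Set.mem_singleton_iff] at hb₂w
  have hwz₁ : w ∈ s \ {z₁} :=
    ⟨hw, fun h => H.irrefl ((Set.mem_singleton_iff.1 h) ▸ hz₁adj)⟩
  obtain ⟨z₂, hz₂s, hz₂adj, -⟩ := first_step (fun h => hb₂w h.symm)
    ((hdel z₁ hz₁s).2 w hwz₁ b₂ hb₂s)
  refine ⟨z₁, z₂, ?_, hz₁s, hz₂s.1, hz₁adj, hz₂adj⟩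
  intro h
  exact hz₂s.2 (Set.mem_singleton_iff.2 h.symm)

/-- a path of length at least 2 between any two distinct vertices of a relatively
2-connected set. -/
lemma path_two (h2 : RTwo H s) {u v : V} (hu : u ∈ s) (hv : v ∈ s) (huv : u ≠ v) :
    ∃ P : H.Walk u v, P.IsPath ∧ (∀ z ∈ P.support, z ∈ s) ∧ 2 ≤ P.length := by
  classical
  obtain ⟨z₁, z₂, hz12, hz₁s, hz₂s, ha₁, ha₂⟩ := two_neighbors h2 hu
  -- pick a neighbour distinct from v
  obtain ⟨z, hzs, hzadj, hzv⟩ : ∃ z, z ∈ s ∧ H.Adj u z ∧ z ≠ v := by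
    by_cases h : z₁ = v
    · exact ⟨z₂, hz₂s, ha₂, fun hh => hz12 (h ▸ hh ▸ rfl)⟩
    · exact ⟨z₁, hz₁s, ha₁, h⟩
  have hzu : z ∈ s \ {u} := ⟨hzs, fun h => H.irrefl (h ▸ hzadj)⟩
  have hvu : v ∈ s \ {u} := ⟨hv, fun h => huv (Set.mem_singleton_iff.1 h).symm⟩
  obtain ⟨W, hW⟩ := (h2.2.2 u hu).2 z hzu v hvu
  set Q := W.bypass with hQ
  have hQpath : Q.IsPath := W.bypass_isPath
  have hQsup : ∀ y ∈ Q.support, y ∈ s \ {u} := fun y hy => hW y (W.support_bypass_subset hy)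
  have hunotin : u ∉ Q.support := fun h => (hQsup u h).2 rfl
  refine ⟨Walk.cons hzadj Q, (Walk.cons_isPath_iff _ _).2 ⟨hQpath, hunotin⟩, ?_, ?_⟩
  · intro y hy
    rcases (by simpa [Walk.support_cons] using hy : y = u ∨ y ∈ Q.support) with rfl | hy
    · exact hu
    · exact (hQsup y hy).1
  · have : Q.length ≠ 0 := fun h0 => hzv (Walk.eq_of_length_eq_zero h0)
    simp only [Walk.length_cons]
    omega

/-- a path from `u` to `c` of length ≥ 2 in `H ⊔ (extra edge u-c)` cannot use the extra edge. -/
lemma no_fake {H' : SimpleGraph V} {u c : V} (hne : u ≠ c) (R : H'.Walk u c)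
    (hp : R.IsPath) (hlen : 2 ≤ R.length) : s(u, c) ∉ R.edges := by
  cases R with
  | nil => simp
  | cons hadj q =>
      rename_i z
      intro hmem
      have hups : u ∉ q.support := ((Walk.cons_isPath_iff _ _).1 hp).2
      rcases (by simpa [Walk.edges_cons] using hmem :
          ((c = z ∨ u = z ∧ c = u) ∨ s(u, c) ∈ q.edges)) with (hzc | ⟨h1, h2⟩) | hq
      · subst hzc
        have : q = Walk.nil := Walk.isPath_iff_eq_nil.1 ((Walk.cons_isPath_iff _ _).1 hp).1
        subst this
        simp [Walk.length_cons] at hlen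
      · exact absurd h1 hadj.ne
      · exact hups (q.fst_mem_support_of_mem_edges hq)

/-- appending two paths meeting only at the common endpoint. -/
lemma isPath_append {u v w : V} {p : H.Walk u v} {q : H.Walk v w}
    (hp : p.IsPath) (hq : q.IsPath)
    (hdisj : ∀ z, z ∈ p.support → z ∈ q.support → z = v) : (p.append q).IsPath := by
  rw [Walk.isPath_def, Walk.support_append, List.nodup_append]
  refine ⟨hp.support_nodup, hq.support_nodup.tail, ?_⟩
  intro z hz y hz' hzy
  subst hzy
  have hzq : z ∈ q.support := List.mem_of_mem_tail hz'
  have hzv : z = v := hdisj z hz hzq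
  have hcons : q.support = v :: q.support.tail := q.support_eq_cons
  have hnd := hq.support_nodup
  rw [hcons] at hnd
  exact absurd (hzv ▸ hz') (List.nodup_cons.1 hnd).1


/-- the statement of the master lemma, for induction on `n`. -/
def MLS (V : Type*) [Fintype V] (n : ℕ) : Prop :=
  ∀ (H : SimpleGraph V) (s : Set V) (k : ℕ) (u v x : V),
    s.ncard ≤ n → RTwo H s → u ∈ s → v ∈ s → u ≠ v →
    (∀ y ∈ s, y ≠ u → y ≠ v → y ≠ x → k ≤ (H.neighborSet y ∩ s).ncard) →
    ∃ P : H.Walk u v, P.IsPath ∧ (∀ z ∈ P.support, z ∈ s) ∧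
      min k (s.ncard - 1) ≤ P.length

lemma cut_exists (h2 : RTwo H s) {w : V} (hw : w ∈ s) (h4 : 4 ≤ s.ncard)
    (hnot : ¬ RTwo H (s \ {w})) : ∃ c ∈ s \ {w}, ¬ RConn H ((s \ {w}) \ {c}) := by
  have hfin : s.Finite := s.toFinite
  have e1 : (s \ {w}).ncard = s.ncard - 1 := Set.ncard_diff_singleton_of_mem hw
  by_contra hcon
  push_neg at hcon
  exact hnot ⟨by omega, h2.2.2 w hw, hcon⟩

lemma pick_nbr (h2 : RTwo H s) {u v : V} (hu : u ∈ s) :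
    ∃ z, z ∈ s ∧ H.Adj u z ∧ z ≠ v := by
  obtain ⟨z₁, z₂, hz12, hz₁s, hz₂s, ha₁, ha₂⟩ := two_neighbors h2 hu
  by_cases h : z₁ = v
  · exact ⟨z₂, hz₂s, ha₂, fun hh => hz12 (h ▸ hh ▸ rfl)⟩
  · exact ⟨z₁, hz₁s, ha₁, h⟩

lemma helperA {n : ℕ} (IH : MLS V n) {k : ℕ} {u v x : V}
    (hcard : s.ncard ≤ n + 1)
    (h2 : RTwo H s) (hu : u ∈ s) (hv : v ∈ s) (huv : u ≠ v)
    (hdeg : ∀ y ∈ s, y ≠ u → y ≠ v → y ≠ x → k ≤ (H.neighborSet y ∩ s).ncard)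
    (hk : 3 ≤ k) (hs4 : 4 ≤ s.ncard)
    (hA : RTwo H (s \ {u})) :
    ∃ P : H.Walk u v, P.IsPath ∧ (∀ z ∈ P.support, z ∈ s) ∧
      min k (s.ncard - 1) ≤ P.length := by
  classical
  have hfin : s.Finite := s.toFinite
  have e1 : (s \ {u}).ncard = s.ncard - 1 := Set.ncard_diff_singleton_of_mem hu
  obtain ⟨u', hu's, hadj, hu'v⟩ := pick_nbr h2 hu (v := v)
  have hu'u : u' ∈ s \ {u} :=
    ⟨hu's, fun h => H.irrefl ((Set.mem_singleton_iff.1 h) ▸ hadj)⟩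
  have hvs' : v ∈ s \ {u} := ⟨hv, fun h => huv (Set.mem_singleton_iff.1 h).symm⟩
  have hdeg' : ∀ y ∈ s \ {u}, y ≠ u' → y ≠ v → y ≠ x →
      k - 1 ≤ (H.neighborSet y ∩ (s \ {u})).ncard := by
    intro y hy hyu' hyv hyx
    have hyu : y ≠ u := fun h => hy.2 (Set.mem_singleton_iff.2 h)
    have h1 : k ≤ (H.neighborSet y ∩ s).ncard := hdeg y hy.1 hyu hyv hyx
    have hsub : (H.neighborSet y ∩ s) ⊆ insert u (H.neighborSet y ∩ (s \ {u})) := by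
      intro q hq
      by_cases hqu : q = u
      · exact Or.inl hqu
      · exact Or.inr ⟨hq.1, hq.2, fun h => hqu (Set.mem_singleton_iff.1 h)⟩
    have h2' : (H.neighborSet y ∩ s).ncard ≤ (H.neighborSet y ∩ (s \ {u})).ncard + 1 :=
      le_trans (Set.ncard_le_ncard hsub (Set.toFinite _)) (Set.ncard_insert_le _ _)
    omega
  obtain ⟨P', hP'path, hP'sup, hP'len⟩ :=
    IH H (s \ {u}) (k - 1) u' v x (by omega) hA hu'u hvs' hu'v hdeg'
  have hunotin : u ∉ P'.support := fun h => (hP'sup u h).2 rfl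
  refine ⟨Walk.cons hadj P', (Walk.cons_isPath_iff _ _).2 ⟨hP'path, hunotin⟩, ?_, ?_⟩
  · intro y hy
    rcases (by simpa [Walk.support_cons] using hy : y = u ∨ y ∈ P'.support) with rfl | hy
    · exact hu
    · exact (hP'sup y hy).1
  · rw [e1] at hP'len
    simp only [Walk.length_cons]
    omega


lemma wkIn_graph_mono {H₂ : SimpleGraph V} (hle : H ≤ H₂) {t : Set V} {p q : V}
    (h : WkIn H t p q) : WkIn H₂ t p q := by
  obtain ⟨W, hW⟩ := h
  refine ⟨W.transfer H₂ (fun e he => ?_), ?_⟩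
  · exact SimpleGraph.edgeSet_mono hle (W.edges_subset_edgeSet he)
  · intro z hz; rw [Walk.support_transfer] at hz; exact hW z hz

lemma helperWin {n : ℕ} (IH : MLS V n) {k : ℕ} {u v x : V}
    (hcard : s.ncard ≤ n + 1)
    (h2 : RTwo H s) (hu : u ∈ s) (hv : v ∈ s) (huv : u ≠ v)
    (hdeg : ∀ y ∈ s, y ≠ u → y ≠ v → y ≠ x → k ≤ (H.neighborSet y ∩ s).ncard)
    (hk : 3 ≤ k) (hs4 : 4 ≤ s.ncard)
    {c : V} (hcs : c ∈ s) (hcu : c ≠ u)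
    (D : Set V) (hDsub : D ⊆ (s \ {u}) \ {c}) (hDne : D.Nonempty)
    (hclose : ∀ p ∈ D, ∀ q ∈ (s \ {u}) \ {c}, H.Adj p q → q ∈ D)
    (hw₀ : ∃ w₀ ∈ (s \ {u}) \ {c}, w₀ ∉ D)
    (hvD : v ∉ D) (hxD : D ≠ {x}) :
    ∃ P : H.Walk u v, P.IsPath ∧ (∀ z ∈ P.support, z ∈ s) ∧
      min k (s.ncard - 1) ≤ P.length := by
  classical
  have hfin : s.Finite := s.toFinite
  have huc : u ≠ c := fun h => hcu h.symm
  -- basic membership facts about s' := (s \ {u}) \ {c}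
  have hmem' : ∀ z, z ∈ (s \ {u}) \ {c} ↔ (z ∈ s ∧ z ≠ u ∧ z ≠ c) := by
    intro z
    simp [Set.mem_diff, Set.mem_singleton_iff, and_assoc]
  have hDs : ∀ z ∈ D, z ∈ s ∧ z ≠ u ∧ z ≠ c := fun z hz => (hmem' z).1 (hDsub hz)
  have huD : u ∉ D := fun h => (hDs u h).2.1 rfl
  have hcD : c ∉ D := fun h => (hDs c h).2.2 rfl
  -- the enlarged graph with the virtual edge u-c
  set H' := H ⊔ fromEdgeSet {s(u, c)} with hH'
  have hle : H ≤ H' := le_sup_left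
  have hH'uc : H'.Adj u c := Or.inr (by simp [fromEdgeSet_adj, huc])
  -- the set s'' = D ∪ {u, c}
  set s'' : Set V := D ∪ {u, c} with hs''
  have hus'' : u ∈ s'' := Or.inr (by simp)
  have hcs'' : c ∈ s'' := Or.inr (by simp)
  have hs''s : s'' ⊆ s := by
    intro z hz
    rcases hz with hz | hz
    · exact (hDs z hz).1
    · rcases hz with rfl | hz
      · exact hu
      · rw [Set.mem_singleton_iff] at hz; exact hz ▸ hcs
  have hmem'' : ∀ z, z ∈ s'' ↔ (z ∈ D ∨ z = u ∨ z = c) := by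
    intro z
    constructor
    · intro hz; rcases hz with hz | hz
      · exact Or.inl hz
      · rcases hz with rfl | hz
        · exact Or.inr (Or.inl rfl)
        · exact Or.inr (Or.inr (Set.mem_singleton_iff.1 hz))
    · intro hz; rcases hz with hz | rfl | rfl
      · exact Or.inl hz
      · exact hus''
      · exact hcs''
  -- attachments of D to u and to c
  have conn_to_u : ∀ e ∈ D, WkIn H (D ∪ {u}) e u := by
    intro e he
    have hRC := h2.2.2 c hcs
    have heD := hDs e he
    have hW : WkIn H (s \ {c}) e u :=
      hRC.2 e ⟨heD.1, fun h => heD.2.2 (Set.mem_singleton_iff.1 h)⟩ u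
        ⟨hu, fun h => huc (Set.mem_singleton_iff.1 h)⟩
    obtain ⟨W, hWsup⟩ := hW
    obtain ⟨z, hzD, hzadj, W', hW'⟩ := attach_lemma (A := D) (M := s \ {c}) (t := u) huD
      (by
        intro p hp q hq hadj
        by_cases hqu : q = u
        · exact Or.inr (Set.mem_singleton_iff.2 hqu)
        · refine Or.inl (hclose p hp q ((hmem' q).2 ⟨hq.1, hqu, ?_⟩) hadj)
          intro h; exact hq.2 (Set.mem_singleton_iff.2 h))
      he W hWsup
    refine wkIn_trans (wkIn_mono Set.subset_union_left ⟨W', hW'⟩)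
      (wkIn_adj hzadj (Or.inl hzD) (Or.inr rfl))
  have conn_to_c : ∀ e ∈ D, WkIn H (D ∪ {c}) e c := by
    intro e he
    have hRC := h2.2.2 u hu
    have heD := hDs e he
    have hW : WkIn H (s \ {u}) e c :=
      hRC.2 e ⟨heD.1, fun h => heD.2.1 (Set.mem_singleton_iff.1 h)⟩ c
        ⟨hcs, fun h => hcu (Set.mem_singleton_iff.1 h)⟩
    obtain ⟨W, hWsup⟩ := hW
    obtain ⟨z, hzD, hzadj, W', hW'⟩ := attach_lemma (A := D) (M := s \ {u}) (t := c) hcD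
      (by
        intro p hp q hq hadj
        by_cases hqc : q = c
        · exact Or.inr (Set.mem_singleton_iff.2 hqc)
        · refine Or.inl (hclose p hp q ((hmem' q).2 ⟨hq.1, ?_, hqc⟩) hadj)
          intro h; exact hq.2 (Set.mem_singleton_iff.2 h))
      he W hWsup
    refine wkIn_trans (wkIn_mono Set.subset_union_left ⟨W', hW'⟩)
      (wkIn_adj hzadj (Or.inl hzD) (Or.inr rfl))
  have conn_avoid : ∀ d ∈ D, ∀ e ∈ D, e ≠ d →
      ∃ z ∈ ({u, c} : Set V), WkIn H ((D \ {d}) ∪ {z}) e z := by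
    intro d hd e he hed
    have hdD := hDs d hd
    have heD := hDs e he
    have hRC := h2.2.2 d hdD.1
    have hW : WkIn H (s \ {d}) e u :=
      hRC.2 e ⟨heD.1, fun h => hed (Set.mem_singleton_iff.1 h)⟩ u
        ⟨hu, fun h => hdD.2.1 (Set.mem_singleton_iff.1 h).symm⟩
    obtain ⟨W, hWsup⟩ := hW
    obtain ⟨z, hzB, W', hW'⟩ := exit_lemma (A := D \ {d}) (B := {u, c}) (M := s \ {d})
      (by
        intro p hp q hq hadj
        by_cases hqu : q = u
        · exact Or.inr (Or.inl hqu)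
        by_cases hqc : q = c
        · exact Or.inr (Or.inr (Set.mem_singleton_iff.2 hqc))
        · refine Or.inl ⟨hclose p hp.1 q ((hmem' q).2 ⟨hq.1, hqu, hqc⟩) hadj, ?_⟩
          intro h; exact hq.2 h)
      W hWsup ⟨he, fun h => hed (Set.mem_singleton_iff.1 h)⟩ (fun h => huD h.1)
    exact ⟨z, hzB, ⟨W', hW'⟩⟩
  -- hub connectivity of s'' in H'
  have hsub_up : ∀ z : V, z ∈ D ∪ ({u} : Set V) → z ∈ s'' := by
    intro z hz
    rcases hz with hz | hz
    · exact (hmem'' z).2 (Or.inl hz)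
    · exact (hmem'' z).2 (Or.inr (Or.inl (Set.mem_singleton_iff.1 hz)))
  have hsub_cp : ∀ z : V, z ∈ D ∪ ({c} : Set V) → z ∈ s'' := by
    intro z hz
    rcases hz with hz | hz
    · exact (hmem'' z).2 (Or.inl hz)
    · exact (hmem'' z).2 (Or.inr (Or.inr (Set.mem_singleton_iff.1 hz)))
  have hhub : ∀ e ∈ s'', WkIn H' s'' e u := by
    intro e he
    rcases (hmem'' e).1 he with heD | rfl | rfl
    · exact wkIn_mono hsub_up (wkIn_graph_mono hle (conn_to_u e heD))
    · exact wkIn_refl hus''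
    · exact wkIn_adj hH'uc.symm hcs'' hus''
  have hRTwo'' : RTwo H' s'' := by
    obtain ⟨a₀, ha₀D⟩ := hDne
    have ha₀ := hDs a₀ ha₀D
    refine ⟨?_, ⟨⟨u, hus''⟩, fun p hp q hq => wkIn_trans (hhub p hp) (wkIn_symm (hhub q hq))⟩, ?_⟩
    · -- 3 ≤ s''.ncard
      have hsub3 : ({a₀, u, c} : Set V) ⊆ s'' := by
        intro z hz
        rcases hz with rfl | rfl | hz
        · exact (hmem'' z).2 (Or.inl ha₀D)
        · exact hus''
        · exact (hmem'' z).2 (Or.inr (Or.inr (Set.mem_singleton_iff.1 hz)))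
      have h3 : ({a₀, u, c} : Set V).ncard = 3 := by
        rw [Set.ncard_insert_of_notMem (by
          intro h
          rcases h with h | h
          · exact ha₀.2.1 h
          · exact ha₀.2.2 (Set.mem_singleton_iff.1 h)) (Set.toFinite _)]
        rw [Set.ncard_insert_of_notMem (by
          intro h; exact huc (Set.mem_singleton_iff.1 h)) (Set.toFinite _)]
        simp
      calc 3 = ({a₀, u, c} : Set V).ncard := h3.symm
        _ ≤ s''.ncard := Set.ncard_le_ncard hsub3 (Set.toFinite _)
    · -- deletion of any w ∈ s''
      intro w hw
      rcases (hmem'' w).1 hw with hwD | hwu | hwc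
      · -- w = d ∈ D
        have hwd := hDs w hwD
        have hune : u ∈ s'' \ {w} :=
          ⟨hus'', fun h => hwd.2.1 (Set.mem_singleton_iff.1 h).symm⟩
        have hcne : c ∈ s'' \ {w} :=
          ⟨hcs'', fun h => hwd.2.2 (Set.mem_singleton_iff.1 h).symm⟩
        have hhub' : ∀ e ∈ s'' \ {w}, WkIn H' (s'' \ {w}) e u := by
          intro e he
          rcases (hmem'' e).1 he.1 with heD | rfl | rfl
          · have hed : e ≠ w := fun h => he.2 (Set.mem_singleton_iff.2 h)
            obtain ⟨z, hzB, hWz⟩ := conn_avoid w hwD e heD hed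
            have hzs : z ∈ s'' \ {w} := by
              rcases hzB with rfl | hz
              · exact hune
              · rw [Set.mem_singleton_iff] at hz; exact hz ▸ hcne
            have hWz' : WkIn H' (s'' \ {w}) e z := by
              refine wkIn_mono ?_ (wkIn_graph_mono hle hWz)
              intro y hy
              rcases hy with hy | hy
              · exact ⟨(hmem'' y).2 (Or.inl hy.1), hy.2⟩
              · rw [Set.mem_singleton_iff] at hy; exact hy ▸ hzs
            refine wkIn_trans hWz' ?_
            rcases hzB with rfl | hz
            · exact wkIn_refl hune
            · rw [Set.mem_singleton_iff] at hz
              subst hz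
              exact wkIn_adj hH'uc.symm hcne hune
          · exact wkIn_refl hune
          · exact wkIn_adj hH'uc.symm hcne hune
        exact ⟨⟨u, hune⟩, fun p hp q hq => wkIn_trans (hhub' p hp) (wkIn_symm (hhub' q hq))⟩
      · -- w = u
        rw [hwu]
        have hcne : c ∈ s'' \ {u} :=
          ⟨hcs'', fun h => hcu (Set.mem_singleton_iff.1 h)⟩
        have hhub' : ∀ e ∈ s'' \ {u}, WkIn H' (s'' \ {u}) e c := by
          intro e he
          rcases (hmem'' e).1 he.1 with heD | rfl | rfl
          · refine wkIn_mono ?_ (wkIn_graph_mono hle (conn_to_c e heD))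
            intro y hy
            rcases hy with hy | hy
            · exact ⟨(hmem'' y).2 (Or.inl hy), fun h => (hDs y hy).2.1 (Set.mem_singleton_iff.1 h)⟩
            · rw [Set.mem_singleton_iff] at hy; exact hy ▸ hcne
          · exact absurd (Set.mem_singleton_iff.2 rfl) he.2
          · exact wkIn_refl hcne
        exact ⟨⟨c, hcne⟩, fun p hp q hq => wkIn_trans (hhub' p hp) (wkIn_symm (hhub' q hq))⟩
      · -- w = c
        rw [hwc]
        have hune : u ∈ s'' \ {c} :=
          ⟨hus'', fun h => huc (Set.mem_singleton_iff.1 h)⟩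
        have hhub' : ∀ e ∈ s'' \ {c}, WkIn H' (s'' \ {c}) e u := by
          intro e he
          rcases (hmem'' e).1 he.1 with heD | rfl | rfl
          · refine wkIn_mono ?_ (wkIn_graph_mono hle (conn_to_u e heD))
            intro y hy
            rcases hy with hy | hy
            · exact ⟨(hmem'' y).2 (Or.inl hy), fun h => (hDs y hy).2.2 (Set.mem_singleton_iff.1 h)⟩
            · rw [Set.mem_singleton_iff] at hy; exact hy ▸ hune
          · exact wkIn_refl hune
          · exact absurd (Set.mem_singleton_iff.2 rfl) he.2
        exact ⟨⟨u, hune⟩, fun p hp q hq => wkIn_trans (hhub' p hp) (wkIn_symm (hhub' q hq))⟩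
  -- degrees inside s''
  have hnbr : ∀ y ∈ D, (H.neighborSet y ∩ s) ⊆ (H'.neighborSet y ∩ s'') := by
    intro y hy q hq
    refine ⟨Or.inl hq.1, ?_⟩
    by_cases hqu : q = u
    · exact (hmem'' q).2 (Or.inr (Or.inl hqu))
    by_cases hqc : q = c
    · exact (hmem'' q).2 (Or.inr (Or.inr hqc))
    · exact (hmem'' q).2 (Or.inl (hclose y hy q ((hmem' q).2 ⟨hq.2, hqu, hqc⟩) hq.1))
  have hdeg'' : ∀ y ∈ s'', y ≠ u → y ≠ c → y ≠ x →
      k ≤ (H'.neighborSet y ∩ s'').ncard := by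
    intro y hy hyu hyc hyx
    have hyD : y ∈ D := by
      rcases (hmem'' y).1 hy with h | h | h
      · exact h
      · exact absurd h hyu
      · exact absurd h hyc
    have hyv : y ≠ v := fun h => hvD (h ▸ hyD)
    exact le_trans (hdeg y (hDs y hyD).1 hyu hyv hyx)
      (Set.ncard_le_ncard (hnbr y hyD) (Set.toFinite _))
  obtain ⟨d₀, hd₀D, hd₀x⟩ : ∃ d₀ ∈ D, d₀ ≠ x := by
    by_contra hcon
    push_neg at hcon
    obtain ⟨a₀, ha₀D⟩ := hDne
    have hxDmem : x ∈ D := (hcon a₀ ha₀D) ▸ ha₀D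
    exact hxD (Set.eq_singleton_iff_unique_mem.2 ⟨hxDmem, hcon⟩)
  have hkcard : k + 1 ≤ s''.ncard := by
    have hsub : (H.neighborSet d₀ ∩ s) ⊆ s'' \ {d₀} := by
      intro q hq
      refine ⟨(hnbr d₀ hd₀D hq).2, ?_⟩
      intro h
      rw [Set.mem_singleton_iff] at h
      exact H.irrefl (h ▸ hq.1)
    have h1 := hdeg d₀ (hDs d₀ hd₀D).1 (hDs d₀ hd₀D).2.1 (fun h => hvD (h ▸ hd₀D)) hd₀x
    have h2' := Set.ncard_le_ncard hsub (Set.toFinite _)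
    have h3 : (s'' \ {d₀}).ncard = s''.ncard - 1 :=
      Set.ncard_diff_singleton_of_mem ((hmem'' d₀).2 (Or.inl hd₀D))
    have h4 : 0 < s''.ncard := (Set.ncard_pos (Set.toFinite _)).2 ⟨u, hus''⟩
    omega
  obtain ⟨w₀, hw₀s', hw₀D⟩ := hw₀
  have hw₀m := (hmem' w₀).1 hw₀s'
  have hcard'' : s''.ncard ≤ n := by
    have hsub : s'' ⊆ s \ {w₀} := by
      intro z hz
      rcases (hmem'' z).1 hz with h | rfl | rfl
      · exact ⟨(hDs z h).1, fun hh => hw₀D ((Set.mem_singleton_iff.1 hh) ▸ h)⟩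
      · exact ⟨hu, fun hh => hw₀m.2.1 (Set.mem_singleton_iff.1 hh).symm⟩
      · exact ⟨hcs, fun hh => hw₀m.2.2 (Set.mem_singleton_iff.1 hh).symm⟩
    have h5 := Set.ncard_le_ncard hsub (Set.toFinite _)
    rw [Set.ncard_diff_singleton_of_mem hw₀m.1] at h5
    omega
  obtain ⟨R₀, hR₀path, hR₀sup, hR₀len⟩ :=
    IH H' s'' k u c x hcard'' hRTwo'' hus'' hcs'' huc hdeg''
  have hR₀len' : k ≤ R₀.length := by omega
  have hedges : ∀ e ∈ R₀.edges, e ∈ H.edgeSet := by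
    intro e he
    have h1 := R₀.edges_subset_edgeSet he
    rw [hH', edgeSet_sup] at h1
    rcases h1 with h1 | h1
    · exact h1
    · rw [edgeSet_fromEdgeSet] at h1
      have he' : e = s(u, c) := by
        have := h1.1
        simpa using this
      exact absurd (he' ▸ he) (no_fake huc R₀ hR₀path (by omega))
  have hRpath : (R₀.transfer H hedges).IsPath := Walk.IsPath.transfer hedges hR₀path
  have hRsup : ∀ z ∈ (R₀.transfer H hedges).support, z ∈ s'' := by
    rw [Walk.support_transfer]; exact hR₀sup
  have hRlen : k ≤ (R₀.transfer H hedges).length := by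
    rw [Walk.length_transfer]; exact hR₀len'
  set R := R₀.transfer H hedges with hRdef
  by_cases hvc : v = c
  · subst hvc
    exact ⟨R, hRpath, fun z hz => hs''s (hRsup z hz), le_trans (min_le_left _ _) hRlen⟩
  · have hWvc : WkIn H (s \ {u}) v c :=
      (h2.2.2 u hu).2 v ⟨hv, fun h => huv (Set.mem_singleton_iff.1 h).symm⟩ c
        ⟨hcs, fun h => hcu (Set.mem_singleton_iff.1 h)⟩
    obtain ⟨W, hWsup⟩ := hWvc
    obtain ⟨W₂, hW₂⟩ := avoid_lemma (M := s \ {u}) (D := D) (b := c)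
      (by
        intro p hp hpD hpc q hq hadj hqD
        exact hpD (hclose q hqD p
          ((hmem' p).2 ⟨hp.1, fun h => hp.2 (Set.mem_singleton_iff.2 h), hpc⟩) hadj.symm))
      W rfl hWsup hvD
    have hPSpath : W₂.reverse.bypass.IsPath := Walk.bypass_isPath _
    have hPSsup : ∀ z ∈ W₂.reverse.bypass.support, z ∈ (s \ {u}) \ D := by
      intro z hz
      have h1 := W₂.reverse.support_bypass_subset hz
      rw [Walk.support_reverse] at h1
      exact hW₂ z (List.mem_reverse.1 h1)
    set PS := W₂.reverse.bypass with hPSdef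
    have hdisj : ∀ z, z ∈ R.support → z ∈ PS.support → z = c := by
      intro z hz hz'
      have h1 := hRsup z hz
      have h2' := hPSsup z hz'
      rcases (hmem'' z).1 h1 with h | rfl | rfl
      · exact absurd h h2'.2
      · exact absurd (Set.mem_singleton_iff.2 rfl) h2'.1.2
      · rfl
    refine ⟨R.append PS, isPath_append hRpath hPSpath hdisj, ?_, ?_⟩
    · intro z hz
      rw [Walk.support_append] at hz
      rcases List.mem_append.1 hz with h | h
      · exact hs''s (hRsup z h)
      · exact (hPSsup z (List.mem_of_mem_tail h)).1.1
    · rw [Walk.length_append]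
      have hmin := min_le_left k (s.ncard - 1)
      omega


/-- the relative connected component of `a` inside `s'`. -/
def cmp (H : SimpleGraph V) (s' : Set V) (a : V) : Set V :=
  {b | b ∈ s' ∧ WkIn H s' a b}

lemma cmp_sub {s' : Set V} {a : V} : cmp H s' a ⊆ s' := fun _ hb => hb.1

lemma mem_cmp_self {s' : Set V} {a : V} (ha : a ∈ s') : a ∈ cmp H s' a :=
  ⟨ha, wkIn_refl ha⟩

lemma cmp_close {s' : Set V} {a : V} :
    ∀ p ∈ cmp H s' a, ∀ q ∈ s', H.Adj p q → q ∈ cmp H s' a :=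
  fun p hp q hq hadj => ⟨hq, wkIn_trans hp.2 (wkIn_adj hadj hp.1 hq)⟩

lemma cmp_wkIn {s' : Set V} {a p q : V} (hp : p ∈ cmp H s' a) (hq : q ∈ cmp H s' a) :
    WkIn H s' p q := wkIn_trans (wkIn_symm hp.2) hq.2

/-- extraction of a failing pair when relative connectivity fails: an element
outside a given component. -/
lemma outside_cmp {s' : Set V} {a : V} (ha : a ∈ s') (hne : s'.Nonempty)
    (hnc : ¬ RConn H s') : ∃ w₀ ∈ s', w₀ ∉ cmp H s' a := by
  by_contra hcon
  push_neg at hcon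
  exact hnc ⟨hne, fun p hp q hq => cmp_wkIn (hcon p hp) (hcon q hq)⟩

lemma sideInfo {u v x : V}
    (h2 : RTwo H s) (hu : u ∈ s) (hv : v ∈ s) (huv : u ≠ v) (hs4 : 4 ≤ s.ncard)
    {c : V} (hcs : c ∈ s) (hcu : c ≠ u) (hnc : ¬ RConn H ((s \ {u}) \ {c}))
    (hnotwin : ∀ a ∈ (s \ {u}) \ {c},
      v ∉ cmp H ((s \ {u}) \ {c}) a → cmp H ((s \ {u}) \ {c}) a = {x}) :
    u ∈ (H.neighborSet x ∩ s) ∧ v ∉ (H.neighborSet x ∩ s) := by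
  classical
  have hfin : s.Finite := s.toFinite
  set s' : Set V := (s \ {u}) \ {c} with hs'
  have hmem' : ∀ z, z ∈ s' ↔ (z ∈ s ∧ z ≠ u ∧ z ≠ c) := by
    intro z
    simp [hs', Set.mem_diff, Set.mem_singleton_iff, and_assoc]
  have hne' : s'.Nonempty := by
    have e1 : (s \ {u}).ncard = s.ncard - 1 := Set.ncard_diff_singleton_of_mem hu
    have e2 : s'.ncard = (s \ {u}).ncard - 1 :=
      Set.ncard_diff_singleton_of_mem (by
        exact ⟨hcs, fun h => hcu (Set.mem_singleton_iff.1 h)⟩)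
    exact (Set.ncard_pos (Set.toFinite _)).1 (by omega)
  -- a failing pair
  have hpair : ∃ a₀ ∈ s', ∃ b₀ ∈ s', ¬ WkIn H s' a₀ b₀ := by
    by_contra hcon
    push_neg at hcon
    exact hnc ⟨hne', hcon⟩
  obtain ⟨a₀, ha₀, b₀, hb₀, hnw⟩ := hpair
  -- some component equals {x}
  have hsing : ∃ a₁ ∈ s', cmp H s' a₁ = {x} := by
    by_cases h1 : v ∈ cmp H s' a₀
    · by_cases h2' : v ∈ cmp H s' b₀
      · exact absurd (wkIn_trans h1.2 (wkIn_symm h2'.2)) hnw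
      · exact ⟨b₀, hb₀, hnotwin b₀ hb₀ h2'⟩
    · exact ⟨a₀, ha₀, hnotwin a₀ ha₀ h1⟩
  obtain ⟨a₁, ha₁, hcmp⟩ := hsing
  have hxa : a₁ = x := by
    have := mem_cmp_self (H := H) ha₁
    rw [hcmp] at this
    exact Set.mem_singleton_iff.1 this
  rw [hxa] at hcmp
  have hx : x ∈ s' := hxa ▸ ha₁
  -- neighbours of x inside s are only u and c
  have hsub : (H.neighborSet x ∩ s) ⊆ {u, c} := by
    intro q hq
    by_cases hqu : q = u
    · exact Or.inl hqu
    by_cases hqc : q = c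
    · exact Or.inr (Set.mem_singleton_iff.2 hqc)
    · exfalso
      have hqs' : q ∈ s' := (hmem' q).2 ⟨hq.2, hqu, hqc⟩
      have : q ∈ cmp H s' x := cmp_close x (mem_cmp_self hx) q hqs' hq.1
      rw [hcmp] at this
      rw [Set.mem_singleton_iff] at this
      subst this
      exact H.irrefl hq.1
  obtain ⟨z₁, z₂, hz12, hz₁s, hz₂s, hxz, ha₂z⟩ := two_neighbors h2 ((hmem' x).1 hx).1
  have hz₁m : z₁ ∈ H.neighborSet x ∩ s := ⟨hxz, hz₁s⟩
  have hz₂m : z₂ ∈ H.neighborSet x ∩ s := ⟨ha₂z, hz₂s⟩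
  have humem : u ∈ H.neighborSet x ∩ s := by
    rcases hsub hz₁m with h1 | h1
    · exact h1 ▸ hz₁m
    · rcases hsub hz₂m with h2' | h2'
      · exact h2' ▸ hz₂m
      · rw [Set.mem_singleton_iff] at h1 h2'
        exact absurd (h1.trans h2'.symm) hz12
  -- v ≠ c here, otherwise contradiction with the failing pair
  have hvc : v ≠ c := by
    intro hvc
    have hva₀ : v ∉ cmp H s' a₀ := fun h => ((hmem' v).1 (cmp_sub h)).2.2 hvc
    have hvb₀ : v ∉ cmp H s' b₀ := fun h => ((hmem' v).1 (cmp_sub h)).2.2 hvc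
    have e1 := hnotwin a₀ ha₀ hva₀
    have e2 := hnotwin b₀ hb₀ hvb₀
    have hax : a₀ = x := Set.mem_singleton_iff.1 (e1 ▸ mem_cmp_self (H := H) ha₀)
    have hbx : b₀ = x := Set.mem_singleton_iff.1 (e2 ▸ mem_cmp_self (H := H) hb₀)
    apply hnw
    rw [hax, hbx]
    exact wkIn_refl (hax ▸ ha₀)
  refine ⟨humem, fun hvm => ?_⟩
  rcases hsub hvm with h1 | h1
  · exact huv h1.symm
  · exact hvc (Set.mem_singleton_iff.1 h1)


lemma ML : ∀ n : ℕ, MLS V n := by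
  intro n
  induction n with
  | zero =>
      intro H s k u v x hcard h2 hu hv huv hdeg
      have h3 := h2.1
      omega
  | succ n IH =>
      intro H s k u v x hcard h2 hu hv huv hdeg
      by_cases heasy : min k (s.ncard - 1) ≤ 2
      · obtain ⟨P, hp, hsup, hlen⟩ := path_two h2 hu hv huv
        exact ⟨P, hp, hsup, by omega⟩
      · push_neg at heasy
        have hk : 3 ≤ k := by omega
        have hs4 : 4 ≤ s.ncard := by omega
        have hdegv : ∀ y ∈ s, y ≠ v → y ≠ u → y ≠ x → k ≤ (H.neighborSet y ∩ s).ncard :=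
          fun y hy h1 h2' h3 => hdeg y hy h2' h1 h3
        by_cases hA : RTwo H (s \ {u})
        · exact helperA IH hcard h2 hu hv huv hdeg hk hs4 hA
        by_cases hB : RTwo H (s \ {v})
        · obtain ⟨P, hp, hsup, hlen⟩ :=
            helperA IH hcard h2 hv hu (Ne.symm huv) hdegv hk hs4 hB
          refine ⟨P.reverse, hp.reverse, ?_, ?_⟩
          · intro z hz
            rw [Walk.support_reverse] at hz
            exact hsup z (List.mem_reverse.1 hz)
          · rw [Walk.length_reverse]; exact hlen
        · obtain ⟨cu, hcu', hncu⟩ := cut_exists h2 hu hs4 hA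
          obtain ⟨cv, hcv', hncv⟩ := cut_exists h2 hv hs4 hB
          have hcus : cu ∈ s := hcu'.1
          have hcuu : cu ≠ u := fun h => hcu'.2 (Set.mem_singleton_iff.2 h)
          have hcvs : cv ∈ s := hcv'.1
          have hcvv : cv ≠ v := fun h => hcv'.2 (Set.mem_singleton_iff.2 h)
          by_cases hwinu : ∃ a ∈ (s \ {u}) \ {cu}, v ∉ cmp H ((s \ {u}) \ {cu}) a ∧
              cmp H ((s \ {u}) \ {cu}) a ≠ {x}
          · obtain ⟨a, ha, hvD, hxD⟩ := hwinu
            obtain ⟨w₀, hw₀, hw₀D⟩ := outside_cmp ha ⟨a, ha⟩ hncu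
            exact helperWin IH hcard h2 hu hv huv hdeg hk hs4 hcus hcuu
              (cmp H ((s \ {u}) \ {cu}) a) cmp_sub ⟨a, mem_cmp_self ha⟩ cmp_close
              ⟨w₀, hw₀, hw₀D⟩ hvD hxD
          by_cases hwinv : ∃ a ∈ (s \ {v}) \ {cv}, u ∉ cmp H ((s \ {v}) \ {cv}) a ∧
              cmp H ((s \ {v}) \ {cv}) a ≠ {x}
          · obtain ⟨a, ha, hvD, hxD⟩ := hwinv
            obtain ⟨w₀, hw₀, hw₀D⟩ := outside_cmp ha ⟨a, ha⟩ hncv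
            obtain ⟨P, hp, hsup, hlen⟩ := helperWin IH hcard h2 hv hu (Ne.symm huv) hdegv
              hk hs4 hcvs hcvv (cmp H ((s \ {v}) \ {cv}) a) cmp_sub ⟨a, mem_cmp_self ha⟩
              cmp_close ⟨w₀, hw₀, hw₀D⟩ hvD hxD
            refine ⟨P.reverse, hp.reverse, ?_, ?_⟩
            · intro z hz
              rw [Walk.support_reverse] at hz
              exact hsup z (List.mem_reverse.1 hz)
            · rw [Walk.length_reverse]; exact hlen
          · push_neg at hwinu hwinv
            have h1 := sideInfo h2 hu hv huv hs4 hcus hcuu hncu hwinu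
            have h2' := sideInfo h2 hv hu (Ne.symm huv) hs4 hcvs hcvv hncv hwinv
            exact absurd h2'.1 h1.2

end TwoConnAux

/-- Let `G` be a 2-connected graph and `x` a vertex of `G`. If every vertex `y ≠ x` has
degree at least `δ`, then every two distinct vertices `u` and `v` are joined in `G` by a
path of order at least `δ + 1`. -/
theorem long_path_of_min_degree_except_one {V : Type*} [Fintype V] (G : SimpleGraph V)
    [DecidableRel G.Adj] (hG : TwoConnected G) (x : V) (δ : ℕ)
    (hdeg : ∀ y : V, y ≠ x → δ ≤ G.degree y)
    (u v : V) (huv : u ≠ v) :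
    ∃ P : G.Walk u v, P.IsPath ∧ δ + 1 ≤ P.length + 1 := by
  classical
  obtain ⟨hcard, hconn, hdel⟩ := hG
  have hnontriv : Nontrivial V := Fintype.one_lt_card_iff_nontrivial.1 (by omega)
  -- relative two-connectivity on the full vertex set
  have hRTwo : TwoConnAux.RTwo G Set.univ := by
    refine ⟨by rwa [Set.ncard_univ, Nat.card_eq_fintype_card], ⟨⟨u, trivial⟩, ?_⟩, ?_⟩
    · intro a _ b _
      obtain ⟨W⟩ := hconn.preconnected a b
      exact ⟨W, fun z _ => trivial⟩
    · intro c _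
      have hc := hdel c
      have hverts : ((⊤ : G.Subgraph).deleteVerts {c}).verts = Set.univ \ {c} := by
        simp [Subgraph.deleteVerts_verts]
      constructor
      · obtain ⟨a, hac⟩ := exists_ne c
        exact ⟨a, trivial, fun h => hac (Set.mem_singleton_iff.1 h)⟩
      · intro a ha b hb
        have ha' : a ∈ ((⊤ : G.Subgraph).deleteVerts {c}).verts := hverts ▸ ha
        have hb' : b ∈ ((⊤ : G.Subgraph).deleteVerts {c}).verts := hverts ▸ hb
        obtain ⟨W⟩ := hc.preconnected ⟨a, ha'⟩ ⟨b, hb'⟩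
        refine ⟨W.map (Subgraph.hom _), ?_⟩
        intro z hz
        have hz' : z ∈ (W.map (Subgraph.hom ((⊤ : G.Subgraph).deleteVerts {c}))).support := hz
        rw [Walk.support_map] at hz'
        obtain ⟨w, hwmem, hweq⟩ := List.mem_map.1 hz'
        have hw2 : (w : V) ∈ Set.univ \ {c} := hverts ▸ w.2
        exact hweq ▸ hw2
  have hdeg' : ∀ y ∈ (Set.univ : Set V), y ≠ u → y ≠ v → y ≠ x →
      δ ≤ (G.neighborSet y ∩ Set.univ).ncard := by
    intro y _ _ _ hyx
    rw [Set.inter_univ]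
    have hcv : (G.neighborSet y).ncard = G.degree y := by
      rw [Set.ncard_eq_toFinset_card', Set.toFinset_card]
      exact G.card_neighborSet_eq_degree y
    rw [hcv]
    exact hdeg y hyx
  obtain ⟨y, hy⟩ := exists_ne x
  have h1 : δ ≤ G.degree y := hdeg y hy
  have h2 : G.degree y < Fintype.card V := G.degree_lt_card_verts y
  obtain ⟨P, hp, -, hlen⟩ := TwoConnAux.ML (V := V) (Fintype.card V) G Set.univ δ u v x
    (by rw [Set.ncard_univ, Nat.card_eq_fintype_card]) hRTwo trivial trivial huv hdeg'
  refine ⟨P, hp, ?_⟩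
  rw [Set.ncard_univ, Nat.card_eq_fintype_card] at hlen
  omega
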